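/- Let A be a weakly idempotent complete exact category with enough projectives and injectives, and let (X, X^⊥) be a complete hereditary cotorsion pair in A. Then for any conflation A ↣ B ↠ C in A: (1) X-pd(A) ≤ max{X-pd(B), X-pd(C) − 1}, with equality if X-pd(B) ≠ X-pd(C) (where, if X-pd(C) = 0, the term X-pd(C) − 1 is interpreted as 0); (2) X-pd(B) ≤ max{X-pd(A), X-pd(C)}, with equality if X-pd(C) ≠ X-pd(A) + 1; (3) X-pd(C) ≤ max{X-pd(B), X-pd(A) + 1}, with equality if X-pd(B) ≠ X-pd(A). -/

import Mathlib

open CategoryTheory CategoryTheory.Limits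

universe w v u v₁ u₁ v₂ u₂ v₃ u₃

namespace CotorsionPaper

variable {A : Type u} [Category.{v} A] [Preadditive A]

/-- The data of an exact structure on an additive category: a distinguished class of
kernel-cokernel pairs, called conflations. -/
structure ExactStruct (A : Type u) [Category.{v} A] [Preadditive A] where
  /-- `IsConflation f g` means that `X ↣ Y ↠ Z` (via `f`, `g`) is a conflation. -/
  IsConflation : ∀ ⦃X Y Z : A⦄, (X ⟶ Y) → (Y ⟶ Z) → Prop

namespace ExactStruct

variable (E : ExactStruct A)

/-- A morphism is an inflation if it is the first map of some conflation. -/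
def Inflation {X Y : A} (f : X ⟶ Y) : Prop :=
  ∃ (Z : A) (g : Y ⟶ Z), E.IsConflation f g

/-- A morphism is a deflation if it is the second map of some conflation. -/
def Deflation {Y Z : A} (g : Y ⟶ Z) : Prop :=
  ∃ (X : A) (f : X ⟶ Y), E.IsConflation f g

/-- Quillen's axioms for an exact category (in Bühler's formulation). -/
structure IsExactCategory : Prop where
  comp_zero : ∀ ⦃X Y Z : A⦄ ⦃f : X ⟶ Y⦄ ⦃g : Y ⟶ Z⦄, E.IsConflation f g → f ≫ g = 0
  isKernel : ∀ ⦃X Y Z : A⦄ ⦃f : X ⟶ Y⦄ ⦃g : Y ⟶ Z⦄ (h : E.IsConflation f g),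
    Nonempty (IsLimit (KernelFork.ofι f (comp_zero h)))
  isCokernel : ∀ ⦃X Y Z : A⦄ ⦃f : X ⟶ Y⦄ ⦃g : Y ⟶ Z⦄ (h : E.IsConflation f g),
    Nonempty (IsColimit (CokernelCofork.ofπ g (comp_zero h)))
  conflation_of_iso : ∀ ⦃X Y Z X' Y' Z' : A⦄ ⦃f : X ⟶ Y⦄ ⦃g : Y ⟶ Z⦄
    (eX : X ≅ X') (eY : Y ≅ Y') (eZ : Z ≅ Z') ⦃f' : X' ⟶ Y'⦄ ⦃g' : Y' ⟶ Z'⦄,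
    E.IsConflation f g → eX.hom ≫ f' = f ≫ eY.hom → eY.hom ≫ g' = g ≫ eZ.hom →
    E.IsConflation f' g'
  id_inflation : ∀ X : A, E.Inflation (𝟙 X)
  id_deflation : ∀ X : A, E.Deflation (𝟙 X)
  inflation_comp : ∀ ⦃X Y Z : A⦄ ⦃f : X ⟶ Y⦄ ⦃g : Y ⟶ Z⦄,
    E.Inflation f → E.Inflation g → E.Inflation (f ≫ g)
  deflation_comp : ∀ ⦃X Y Z : A⦄ ⦃f : X ⟶ Y⦄ ⦃g : Y ⟶ Z⦄,
    E.Deflation f → E.Deflation g → E.Deflation (f ≫ g)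
  inflation_pushout : ∀ ⦃X Y X' : A⦄ ⦃f : X ⟶ Y⦄ (u : X ⟶ X'), E.Inflation f →
    ∃ (Y' : A) (f' : X' ⟶ Y') (v : Y ⟶ Y'), E.Inflation f' ∧ IsPushout f u v f'
  deflation_pullback : ∀ ⦃Y Z Z' : A⦄ ⦃g : Y ⟶ Z⦄ (u : Z' ⟶ Z), E.Deflation g →
    ∃ (Y' : A) (g' : Y' ⟶ Z') (v : Y' ⟶ Y), E.Deflation g' ∧ IsPullback g' v u g

end ExactStruct

/-- An additive category is weakly idempotent complete if every split monomorphism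
has a cokernel. -/
def WIC (A : Type u) [Category.{v} A] [Preadditive A] : Prop :=
  ∀ ⦃X Y : A⦄ (f : X ⟶ Y), (∃ r : Y ⟶ X, f ≫ r = 𝟙 X) → HasCokernel f

namespace ExactStruct

variable (E : ExactStruct A)

/-- An object is projective (relative to the exact structure) if maps out of it lift
along deflations. -/
def ProjObj (P : A) : Prop :=
  ∀ ⦃Y Z : A⦄ ⦃g : Y ⟶ Z⦄, E.Deflation g → ∀ h : P ⟶ Z, ∃ l : P ⟶ Y, l ≫ g = h

/-- An object is injective (relative to the exact structure) if maps into it extend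
along inflations. -/
def InjObj (I : A) : Prop :=
  ∀ ⦃X Y : A⦄ ⦃f : X ⟶ Y⦄, E.Inflation f → ∀ h : X ⟶ I, ∃ l : Y ⟶ I, f ≫ l = h

/-- The exact category has enough projectives: every object admits a deflation from
a projective object. -/
def EnoughProjectives : Prop :=
  ∀ M : A, ∃ (K P : A) (f : K ⟶ P) (g : P ⟶ M), E.ProjObj P ∧ E.IsConflation f g

/-- The exact category has enough injectives. -/
def EnoughInjectives : Prop :=
  ∀ M : A, ∃ (I C : A) (f : M ⟶ I) (g : I ⟶ C), E.InjObj I ∧ E.IsConflation f g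

/-- `Ext¹(M, Y) = 0`: every conflation `Y ↣ Eo ↠ M` splits. -/
def Ext1Zero (M Y : A) : Prop :=
  ∀ ⦃Eo : A⦄ ⦃f : Y ⟶ Eo⦄ ⦃g : Eo ⟶ M⦄, E.IsConflation f g → ∃ s : M ⟶ Eo, s ≫ g = 𝟙 M

end ExactStruct

/-- `ExtZero E n M Y` means `Extⁿ(M, Y) = 0` (defined by dimension shifting along
projective presentations; the value at `n = 0` is irrelevant and set to `True`). -/
def ExtZero (E : ExactStruct A) : ℕ → A → A → Prop
  | 0, _, _ => True
  | 1, M, Y => E.Ext1Zero M Y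
  | (n + 2), M, Y => ∀ ⦃K P : A⦄ ⦃f : K ⟶ P⦄ ⦃g : P ⟶ M⦄,
      E.ProjObj P → E.IsConflation f g → ExtZero E (n + 1) K Y

namespace ExactStruct

variable (E : ExactStruct A)

/-- The right Ext-orthogonal of a class of objects. -/
def rightPerp (X : Set A) : Set A := {M | ∀ C ∈ X, E.Ext1Zero C M}

/-- The left Ext-orthogonal of a class of objects. -/
def leftPerp (Y : Set A) : Set A := {M | ∀ L ∈ Y, E.Ext1Zero M L}

end ExactStruct

/-- `SyzOf E X n K M` : `K` is an `n`-th syzygy of `M`, i.e. there is an acyclic sequence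
`K ↣ X_{n-1} → ⋯ → X_0 ↠ M` with all middle terms in `X`. -/
def SyzOf (E : ExactStruct A) (X : Set A) : ℕ → A → A → Prop
  | 0, K, M => Nonempty (K ≅ M)
  | (n + 1), K, M => ∃ (K' X0 : A) (f : K' ⟶ X0) (g : X0 ⟶ M),
      X0 ∈ X ∧ E.IsConflation f g ∧ SyzOf E X n K K'

/-- `CosyzOf E Y n C M` : `C` is an `n`-th cosyzygy of `M` with respect to `Y`. -/
def CosyzOf (E : ExactStruct A) (Y : Set A) : ℕ → A → A → Prop
  | 0, C, M => Nonempty (M ≅ C)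
  | (n + 1), C, M => ∃ (C' Y0 : A) (f : M ⟶ Y0) (g : Y0 ⟶ C'),
      Y0 ∈ Y ∧ E.IsConflation f g ∧ CosyzOf E Y n C C'

namespace ExactStruct

variable (E : ExactStruct A)

/-- There is an acyclic sequence `X_n ↣ X_{n-1} → ⋯ → X_0 ↠ M` with all `X_i ∈ X`. -/
def pdLE (X : Set A) (n : ℕ) (M : A) : Prop := ∃ K, K ∈ X ∧ SyzOf E X n K M

/-- The `X`-projective dimension of `M`, valued in `ℕ∞`. -/
noncomputable def pdim (X : Set A) (M : A) : ℕ∞ :=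
  sInf ((fun m : ℕ => (m : ℕ∞)) '' {m : ℕ | E.pdLE X m M})

/-- `X_n`: the class of objects of `X`-projective dimension at most `n`. -/
def pdSet (X : Set A) (n : ℕ) : Set A := {M | E.pdim X M ≤ (n : ℕ∞)}

/-- There is an acyclic sequence `M ↣ Y^0 → ⋯ → Y^{n-1} ↠ Y^n` with all `Y^i ∈ Y`. -/
def idLE (Y : Set A) (n : ℕ) (M : A) : Prop := ∃ C, C ∈ Y ∧ CosyzOf E Y n C M

/-- The `Y`-injective dimension of `M`, valued in `ℕ∞`. -/
noncomputable def idim (Y : Set A) (M : A) : ℕ∞ :=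
  sInf ((fun m : ℕ => (m : ℕ∞)) '' {m : ℕ | E.idLE Y m M})

/-- `Y_n`: the class of objects of `Y`-injective dimension at most `n`. -/
def idSet (Y : Set A) (n : ℕ) : Set A := {M | E.idim Y M ≤ (n : ℕ∞)}

/-- `(X, Y)` is a cotorsion pair. -/
def IsCotorsionPair (X Y : Set A) : Prop :=
  E.rightPerp X = Y ∧ E.leftPerp Y = X

/-- `(X, Y)` is a complete cotorsion pair. -/
def IsCompleteCP (X Y : Set A) : Prop :=
  E.IsCotorsionPair X Y ∧
  (∀ M : A, ∃ (Y' X' : A) (f : Y' ⟶ X') (g : X' ⟶ M),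
    Y' ∈ Y ∧ X' ∈ X ∧ E.IsConflation f g) ∧
  (∀ M : A, ∃ (Y'' X'' : A) (f : M ⟶ Y'') (g : Y'' ⟶ X''),
    Y'' ∈ Y ∧ X'' ∈ X ∧ E.IsConflation f g)

/-- Heredity conditions: `X` is closed under kernels of deflations and `Y` is closed
under cokernels of inflations. -/
def HereditaryClasses (X Y : Set A) : Prop :=
  (∀ ⦃K B C : A⦄ ⦃f : K ⟶ B⦄ ⦃g : B ⟶ C⦄,
    E.IsConflation f g → B ∈ X → C ∈ X → K ∈ X) ∧
  (∀ ⦃K B C : A⦄ ⦃f : K ⟶ B⦄ ⦃g : B ⟶ C⦄,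
    E.IsConflation f g → K ∈ Y → B ∈ Y → C ∈ Y)

/-- `W` is a thick class: closed under direct summands and two-out-of-three
in conflations. -/
def IsThick (W : Set A) : Prop :=
  (∀ ⦃M N : A⦄ (s : M ⟶ N) (r : N ⟶ M), s ≫ r = 𝟙 M → N ∈ W → M ∈ W) ∧
  (∀ ⦃X Y Z : A⦄ ⦃f : X ⟶ Y⦄ ⦃g : Y ⟶ Z⦄, E.IsConflation f g →
    ((X ∈ W → Y ∈ W → Z ∈ W) ∧ (X ∈ W → Z ∈ W → Y ∈ W) ∧ (Y ∈ W → Z ∈ W → X ∈ W)))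

/-- `(C, W, F)` is a Hovey triple. -/
def IsHoveyTriple (C W F : Set A) : Prop :=
  E.IsCompleteCP (C ∩ W) F ∧ E.IsCompleteCP C (W ∩ F) ∧ E.IsThick W

/-- `(C, W, F)` is a hereditary Hovey triple. -/
def IsHereditaryHoveyTriple (C W F : Set A) : Prop :=
  E.IsHoveyTriple C W F ∧ E.HereditaryClasses (C ∩ W) F ∧ E.HereditaryClasses C (W ∩ F)

/-- A complete cotorsion pair `(X, Y)` is left extendable if `(X_n, X_n^⊥)` is a
complete cotorsion pair for every `n ≥ 0`. -/
def LeftExtendable (X Y : Set A) : Prop :=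
  E.IsCompleteCP X Y ∧
  ∀ n : ℕ, E.IsCompleteCP (E.pdSet X n) (E.rightPerp (E.pdSet X n))

/-- A complete cotorsion pair `(X, Y)` is right extendable if `(⊥(Y_n), Y_n)` is a
complete cotorsion pair for every `n ≥ 0`. -/
def RightExtendable (X Y : Set A) : Prop :=
  E.IsCompleteCP X Y ∧
  ∀ n : ℕ, E.IsCompleteCP (E.leftPerp (E.idSet Y n)) (E.idSet Y n)

/-- The class `Y` is the right Ext-orthogonal of a set (i.e. small family) of objects. -/
def SetGenerated (Y : Set A) : Prop :=
  ∃ (ι : Type v) (G : ι → A), Y = {M | ∀ i, E.Ext1Zero (G i) M}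

/-- Trivial cofibrations of the exact model structure associated to a Hovey triple:
inflations with cokernel in `C ∩ W`. -/
def TrivCof (C W : Set A) : MorphismProperty A := fun X Y f =>
  ∃ (Z : A) (g : Y ⟶ Z), E.IsConflation f g ∧ Z ∈ C ∩ W

/-- Trivial fibrations: deflations with kernel in `W ∩ F`. -/
def TrivFib (W F : Set A) : MorphismProperty A := fun Y Z g =>
  ∃ (K : A) (f : K ⟶ Y), E.IsConflation f g ∧ K ∈ W ∩ F

/-- Weak equivalences of the exact model structure associated to a Hovey triple. -/
def WeakEquiv (C W F : Set A) : MorphismProperty A := fun X Y f =>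
  ∃ (Z : A) (i : X ⟶ Z) (p : Z ⟶ Y), E.TrivCof C W i ∧ E.TrivFib W F p ∧ i ≫ p = f

/-- The homotopy category of the exact model structure associated to the Hovey triple
`(C, W, F)`: the localization of `A` at the weak equivalences. -/
abbrev Ho (C W F : Set A) := (E.WeakEquiv C W F).Localization

end ExactStruct

/-- The full subcategory on a class of objects. -/
abbrev SubCat (S : Set A) := ObjectProperty.FullSubcategory (fun X : A => X ∈ S)

/-- The stable relation: two maps are identified if their difference factors through
an object of `P`. -/
def stableRel (S P : Set A) : HomRel (SubCat S) := fun X Y f g =>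
  ∃ (Q : A) (u : X.obj ⟶ Q) (v : Q ⟶ Y.obj),
    Q ∈ P ∧ f.hom - g.hom = u ≫ v

/-- The stable category of the full subcategory on `S`, modulo maps factoring through
objects of `P`. -/
abbrev StableCat (S P : Set A) := CategoryTheory.Quotient (stableRel S P)

namespace ExactStruct

variable (E : ExactStruct A)

/-- `P0` is a projective object of the full exact subcategory on `S`. -/
def SubProjObj (S : Set A) (P0 : A) : Prop :=
  P0 ∈ S ∧ ∀ ⦃X Y Z : A⦄ ⦃f : X ⟶ Y⦄ ⦃g : Y ⟶ Z⦄,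
    E.IsConflation f g → X ∈ S → Y ∈ S → Z ∈ S →
    ∀ h : P0 ⟶ Z, ∃ l : P0 ⟶ Y, l ≫ g = h

/-- `I0` is an injective object of the full exact subcategory on `S`. -/
def SubInjObj (S : Set A) (I0 : A) : Prop :=
  I0 ∈ S ∧ ∀ ⦃X Y Z : A⦄ ⦃f : X ⟶ Y⦄ ⦃g : Y ⟶ Z⦄,
    E.IsConflation f g → X ∈ S → Y ∈ S → Z ∈ S →
    ∀ h : X ⟶ I0, ∃ l : Y ⟶ I0, f ≫ l = h

/-- The full exact subcategory on `S` is a Frobenius category whose class of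
projective-injective objects is `P`. -/
def IsFrobeniusSub (S P : Set A) : Prop :=
  (∀ Q0 : A, E.SubProjObj S Q0 ↔ Q0 ∈ S ∩ P) ∧
  (∀ Q0 : A, E.SubInjObj S Q0 ↔ Q0 ∈ S ∩ P) ∧
  (∀ M ∈ S, ∃ (K Q0 : A) (f : K ⟶ Q0) (g : Q0 ⟶ M),
    K ∈ S ∧ Q0 ∈ P ∧ E.IsConflation f g) ∧
  (∀ M ∈ S, ∃ (Q0 C0 : A) (f : M ⟶ Q0) (g : Q0 ⟶ C0),
    C0 ∈ S ∧ Q0 ∈ P ∧ E.IsConflation f g)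

end ExactStruct

/-- The canonical exact structure of an abelian category: conflations are the short
exact sequences. -/
def abelianES (A : Type u) [Category.{v} A] [Abelian A] : ExactStruct A where
  IsConflation X Y Z f g :=
    ∃ w : f ≫ g = 0, Mono f ∧ Epi g ∧ (ShortComplex.mk f g w).Exact

/-- A recollement (at the level of plain categories) of `T₂` relative to `T₁` and `T₃`. -/
structure Recollement (T₁ : Type u₁) (T₂ : Type u₂) (T₃ : Type u₃)
    [Category.{v₁} T₁] [Category.{v₂} T₂] [Category.{v₃} T₃] where
  i : T₁ ⥤ T₂
  iStar : T₂ ⥤ T₁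
  iShriek : T₂ ⥤ T₁
  j : T₂ ⥤ T₃
  jShriek : T₃ ⥤ T₂
  jStar : T₃ ⥤ T₂
  adj₁ : iStar ⊣ i
  adj₂ : i ⊣ iShriek
  adj₃ : jShriek ⊣ j
  adj₄ : j ⊣ jStar
  i_ff : i.FullyFaithful
  jShriek_ff : jShriek.FullyFaithful
  jStar_ff : jStar.FullyFaithful
  ker : ∀ X : T₂, Limits.IsZero (j.obj X) ↔ ∃ Y : T₁, Nonempty (X ≅ i.obj Y)

section Presentable

/-- A preorder is `λ`-directed if every subset of cardinality `< λ` has an upper bound. -/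
def IsLamDirected (lam : Cardinal.{v}) (J : Type v) [Preorder J] : Prop :=
  ∀ s : Set J, Cardinal.mk s < lam → ∃ u : J, ∀ j ∈ s, j ≤ u

/-- An object `X` is `λ`-presentable if `Hom(X, −)` preserves `λ`-directed colimits. -/
def IsPresentableObj (lam : Cardinal.{v}) (X : A) : Prop :=
  ∀ (J : Type v) [Preorder J], IsLamDirected lam J →
    ∀ (D : J ⥤ A) (c : Cocone D), IsColimit c →
      (∀ f : X ⟶ c.pt, ∃ (j : J) (g : X ⟶ D.obj j), g ≫ c.ι.app j = f) ∧
      (∀ (j j' : J) (g : X ⟶ D.obj j) (g' : X ⟶ D.obj j'),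
        g ≫ c.ι.app j = g' ≫ c.ι.app j' →
        ∃ (l : J) (hj : j ≤ l) (hj' : j' ≤ l),
          g ≫ D.map (homOfLE hj) = g' ≫ D.map (homOfLE hj'))

/-- `X` is a `λ`-directed colimit of objects isomorphic to members of the family `G`. -/
def IsLamDirColimitOf (lam : Cardinal.{v}) {ι : Type v} (G : ι → A) (X : A)
    (J : Type v) [Preorder J] : Prop :=
  IsLamDirected lam J ∧
  ∃ (D : J ⥤ A) (c : Cocone D), Nonempty (IsColimit c) ∧ Nonempty (c.pt ≅ X) ∧
    ∀ j : J, ∃ i : ι, Nonempty (D.obj j ≅ G i)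

/-- The category `A` is `λ`-accessible. -/
def IsAccessibleCat (A : Type u) [Category.{v} A] (lam : Cardinal.{v}) : Prop :=
  Cardinal.IsRegular lam ∧
  ∃ (ι : Type v) (G : ι → A),
    (∀ i, IsPresentableObj lam (G i)) ∧
    ∀ X : A, ∃ (J : Type v) (instJ : Preorder J),
      @IsLamDirColimitOf A _ lam ι G X J instJ

/-- The category `A` is locally presentable: cocomplete and accessible. -/
def IsLocallyPresentableCat (A : Type u) [Category.{v} A] : Prop :=
  HasColimitsOfSize.{v, v} A ∧ ∃ lam : Cardinal.{v}, IsAccessibleCat A lam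

end Presentable

end CotorsionPaper

namespace CotorsionPaper

section AuxProof

variable {A : Type u} [Category.{v} A] [Preadditive A] {E : ExactStruct A}

lemma conf_mono (hE : E.IsExactCategory) {X Y Z : A} {f : X ⟶ Y} {g : Y ⟶ Z}
    (h : E.IsConflation f g) : Mono f := by
  obtain ⟨hl⟩ := hE.isKernel h
  exact ⟨fun a b hab => Fork.IsLimit.hom_ext hl (by simpa using hab)⟩

lemma conf_epi (hE : E.IsExactCategory) {X Y Z : A} {f : X ⟶ Y} {g : Y ⟶ Z}
    (h : E.IsConflation f g) : Epi g := by
  obtain ⟨hc⟩ := hE.isCokernel h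
  exact ⟨fun a b hab => Cofork.IsColimit.hom_ext hc (by simpa using hab)⟩

lemma conf_lift (hE : E.IsExactCategory) {X Y Z : A} {f : X ⟶ Y} {g : Y ⟶ Z}
    (h : E.IsConflation f g) {T : A} (τ : T ⟶ Y) (hτ : τ ≫ g = 0) :
    ∃ σ : T ⟶ X, σ ≫ f = τ := by
  obtain ⟨hl⟩ := hE.isKernel h
  obtain ⟨l, hl'⟩ := KernelFork.IsLimit.lift' hl τ hτ
  exact ⟨l, by simpa using hl'⟩

lemma conf_desc (hE : E.IsExactCategory) {X Y Z : A} {f : X ⟶ Y} {g : Y ⟶ Z}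
    (h : E.IsConflation f g) {T : A} (τ : Y ⟶ T) (hτ : f ≫ τ = 0) :
    ∃ σ : Z ⟶ T, g ≫ σ = τ := by
  obtain ⟨hc⟩ := hE.isCokernel h
  obtain ⟨l, hl'⟩ := CokernelCofork.IsColimit.desc' hc τ hτ
  exact ⟨l, by simpa using hl'⟩

/-- Replace the kernel of a conflation by another kernel. -/
lemma conflation_of_kernel (hE : E.IsExactCategory) {X X' Y Z : A} {f : X ⟶ Y} {g : Y ⟶ Z}
    (h : E.IsConflation f g) {c : X' ⟶ Y} (hc0 : c ≫ g = 0)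
    (hfac : ∀ {T : A} (τ : T ⟶ Y), τ ≫ g = 0 → ∃ σ : T ⟶ X', σ ≫ c = τ)
    (hmono : ∀ {T : A} (a b : T ⟶ X'), a ≫ c = b ≫ c → a = b) :
    E.IsConflation c g := by
  obtain ⟨α, hα⟩ := hfac f (hE.comp_zero h)
  obtain ⟨β, hβ⟩ := conf_lift hE h c hc0
  have hmf : Mono f := conf_mono hE h
  have h1 : α ≫ β = 𝟙 X := by
    rw [← cancel_mono f]; rw [Category.assoc, hβ, hα, Category.id_comp]
  have h2 : β ≫ α = 𝟙 X' := by
    apply hmono; rw [Category.assoc, hα, hβ, Category.id_comp]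
  exact hE.conflation_of_iso ⟨α, β, h1, h2⟩ (Iso.refl Y) (Iso.refl Z) h
    (by simpa using hα) (by simp)

/-- Replace the cokernel of a conflation by another cokernel. -/
lemma conflation_of_cokernel (hE : E.IsExactCategory) {X Y Z Z' : A} {f : X ⟶ Y} {g : Y ⟶ Z}
    (h : E.IsConflation f g) {c : Y ⟶ Z'} (hc0 : f ≫ c = 0)
    (hfac : ∀ {T : A} (τ : Y ⟶ T), f ≫ τ = 0 → ∃ σ : Z' ⟶ T, c ≫ σ = τ)
    (hepi : ∀ {T : A} (a b : Z' ⟶ T), c ≫ a = c ≫ b → a = b) :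
    E.IsConflation f c := by
  obtain ⟨α, hα⟩ := hfac g (hE.comp_zero h)
  obtain ⟨β, hβ⟩ := conf_desc hE h c hc0
  have heg : Epi g := conf_epi hE h
  have h1 : β ≫ α = 𝟙 Z := by
    rw [← cancel_epi g]; rw [← Category.assoc, hβ, hα, Category.comp_id]
  have h2 : α ≫ β = 𝟙 Z' := by
    apply hepi; rw [← Category.assoc, hα, hβ, Category.comp_id]
  exact hE.conflation_of_iso (Iso.refl X) (Iso.refl Y) ⟨β, α, h1, h2⟩ h
    (by simp) (by simpa using hβ.symm)

/-- An isomorphism is a deflation. -/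
lemma deflation_of_iso (hE : E.IsExactCategory) {P Q : A} (e : P ≅ Q) :
    E.Deflation e.hom := by
  obtain ⟨K, k, hk⟩ := hE.id_deflation P
  exact ⟨K, k, hE.conflation_of_iso (Iso.refl K) (Iso.refl P) e hk (by simp) (by simp)⟩

/-- Transport of a conflation along an isomorphism of the quotient. -/
lemma conflation_iso_target (hE : E.IsExactCategory) {X Y Z Z' : A} {f : X ⟶ Y} {g : Y ⟶ Z}
    (h : E.IsConflation f g) (e : Z ≅ Z') : E.IsConflation f (g ≫ e.hom) :=
  hE.conflation_of_iso (Iso.refl X) (Iso.refl Y) e h (by simp) (by simp)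

/-- A retraction of the inflation yields a section of the deflation. -/
lemma section_of_retraction (hE : E.IsExactCategory) {X Y Z : A} {u : X ⟶ Y} {p : Y ⟶ Z}
    (h : E.IsConflation u p) (r : Y ⟶ X) (hr : u ≫ r = 𝟙 X) :
    ∃ s : Z ⟶ Y, s ≫ p = 𝟙 Z := by
  have h0 : u ≫ (𝟙 Y - r ≫ u) = 0 := by
    simp [Preadditive.comp_sub, ← Category.assoc, hr]
  obtain ⟨σ, hσ⟩ := conf_desc hE h _ h0
  refine ⟨σ, ?_⟩
  have hep : Epi p := conf_epi hE h
  rw [← cancel_epi p, ← Category.assoc, hσ]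
  simp [Preadditive.sub_comp, Category.assoc, hE.comp_zero h]

/-- A section of the deflation yields a retraction of the inflation. -/
lemma retraction_of_section (hE : E.IsExactCategory) {X Y Z : A} {u : X ⟶ Y} {p : Y ⟶ Z}
    (h : E.IsConflation u p) (s : Z ⟶ Y) (hs : s ≫ p = 𝟙 Z) :
    ∃ r : Y ⟶ X, u ≫ r = 𝟙 X := by
  have h0 : (𝟙 Y - p ≫ s) ≫ p = 0 := by
    simp [Preadditive.sub_comp, Category.assoc, hs]
  obtain ⟨σ, hσ⟩ := conf_lift hE h _ h0
  refine ⟨σ, ?_⟩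
  have hm : Mono u := conf_mono hE h
  rw [← cancel_mono u, Category.assoc, hσ]
  simp [Preadditive.comp_sub, ← Category.assoc, hE.comp_zero h]

end AuxProof
section AuxProof2

variable {A : Type u} [Category.{v} A] [Preadditive A] {E : ExactStruct A}

/-- Pullback of a conflation along an arbitrary morphism. -/
lemma pullback_conf (hE : E.IsExactCategory) {K Y₁ Z₁ Z₂ : A} {k : K ⟶ Y₁} {q : Y₁ ⟶ Z₁}
    (h : E.IsConflation k q) (t : Z₂ ⟶ Z₁) :
    ∃ (P : A) (k' : K ⟶ P) (q' : P ⟶ Z₂) (v : P ⟶ Y₁),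
      E.IsConflation k' q' ∧ IsPullback q' v t q ∧ k' ≫ v = k := by
  obtain ⟨P, q', v, hdef, hpb⟩ := hE.deflation_pullback t ⟨K, k, h⟩
  have hk0 : (0 : K ⟶ Z₂) ≫ t = k ≫ q := by simp [hE.comp_zero h]
  refine ⟨P, hpb.lift 0 k hk0, q', v, ?_, hpb, hpb.lift_snd _ _ _⟩
  obtain ⟨K₀, k₀, hconf₀⟩ := hdef
  refine conflation_of_kernel hE hconf₀ (by simp) ?_ ?_
  · intro T τ hτ
    have h1 : (τ ≫ v) ≫ q = 0 := by
      rw [Category.assoc, ← hpb.w, ← Category.assoc, hτ, Limits.zero_comp]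
    obtain ⟨σ, hσ⟩ := conf_lift hE h (τ ≫ v) h1
    refine ⟨σ, hpb.hom_ext (by simp [hτ]) ?_⟩
    rw [Category.assoc, hpb.lift_snd, hσ]
  · intro T a b hab
    have hm : Mono k := conf_mono hE h
    rw [← cancel_mono k, ← hpb.lift_snd 0 k hk0]
    simp only [← Category.assoc, hab]

/-- The pullback of a conflation along the inflation of another conflation is the kernel
of the composite deflation. -/
lemma conf_pullback_comp (hE : E.IsExactCategory) {Y' E₀ B C A₁ P : A} {u : Y' ⟶ E₀}
    {p : E₀ ⟶ B} {f : A₁ ⟶ B} {g : B ⟶ C} {q' : P ⟶ A₁} {v : P ⟶ E₀}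
    (h₁ : E.IsConflation u p) (h₂ : E.IsConflation f g)
    (hpb : IsPullback q' v f p) :
    E.IsConflation v (p ≫ g) := by
  have hdef : E.Deflation (p ≫ g) := hE.deflation_comp ⟨_, _, h₁⟩ ⟨_, _, h₂⟩
  obtain ⟨K₀, k₀, h₀⟩ := hdef
  refine conflation_of_kernel hE h₀ ?_ ?_ ?_
  · simp only [← Category.assoc, ← hpb.w]
    simp [Category.assoc, hE.comp_zero h₂]
  · intro T τ hτ
    rw [← Category.assoc] at hτ
    obtain ⟨σ, hσ⟩ := conf_lift hE h₂ (τ ≫ p) hτ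
    exact ⟨hpb.lift σ τ (by rw [hσ]), hpb.lift_snd _ _ _⟩
  · intro T a b hab
    have hm : Mono f := conf_mono hE h₂
    refine hpb.hom_ext ?_ hab
    rw [← cancel_mono f]
    simp only [Category.assoc, hpb.w]
    simp only [← Category.assoc, hab]

/-- Pullback of two deflations onto the same object: both kernels survive. -/
lemma pullback_two_conf (hE : E.IsExactCategory) {K K' X₀ X₀' M : A} {k : K ⟶ X₀}
    {q : X₀ ⟶ M} {k' : K' ⟶ X₀'} {q' : X₀' ⟶ M}
    (h : E.IsConflation k q) (h' : E.IsConflation k' q') :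
    ∃ (P : A) (v : P ⟶ X₀) (w : P ⟶ X₀') (φ : K ⟶ P) (ψ : K' ⟶ P),
      E.IsConflation φ w ∧ E.IsConflation ψ v := by
  obtain ⟨P, v, w, hvdef, hpb⟩ := hE.deflation_pullback q ⟨K', k', h'⟩
  -- v : P ⟶ X₀ (a deflation), w : P ⟶ X₀', hpb : IsPullback v w q q'
  have hφw : k ≫ q = (0 : K ⟶ X₀') ≫ q' := by simp [hE.comp_zero h]
  have hψw : (0 : K' ⟶ X₀) ≫ q = k' ≫ q' := by simp [hE.comp_zero h']
  set φ := hpb.lift k 0 hφw with hφdef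
  set ψ := hpb.lift 0 k' hψw with hψdef
  have hφv : φ ≫ v = k := hpb.lift_fst _ _ _
  have hφw' : φ ≫ w = 0 := hpb.lift_snd _ _ _
  have hψv : ψ ≫ v = 0 := hpb.lift_fst _ _ _
  have hψw'' : ψ ≫ w = k' := hpb.lift_snd _ _ _
  have hmk : Mono k := conf_mono hE h
  have hmk' : Mono k' := conf_mono hE h'
  -- conflation ψ ≫ v  (v is a deflation)
  obtain ⟨K₀, k₀, hconf₀⟩ := hvdef
  have hconfψ : E.IsConflation ψ v := by
    refine conflation_of_kernel hE hconf₀ hψv ?_ ?_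
    · intro T τ hτ
      have h1 : (τ ≫ w) ≫ q' = 0 := by
        rw [Category.assoc, ← hpb.w, ← Category.assoc, hτ, Limits.zero_comp]
      obtain ⟨σ, hσ⟩ := conf_lift hE h' (τ ≫ w) h1
      refine ⟨σ, hpb.hom_ext ?_ ?_⟩
      · rw [Category.assoc, hψv, Limits.comp_zero, hτ]
      · rw [Category.assoc, hψw'', hσ]
    · intro T a b hab
      rw [← cancel_mono k', ← hψw'']
      simp only [← Category.assoc, hab]
  -- w is a deflation as well: compare with the pullback taken in the other order
  obtain ⟨P₂, g₂, v₂, hg₂def, hpb₂⟩ := hE.deflation_pullback q' ⟨K, k, h⟩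
  -- g₂ : P₂ ⟶ X₀', v₂ : P₂ ⟶ X₀, hpb₂ : IsPullback g₂ v₂ q' q
  have hwdef : E.Deflation w := by
    have hcomp : (hpb.flip.isoIsPullback _ _ hpb₂).hom ≫ g₂ = w :=
      IsPullback.isoIsPullback_hom_fst _ _ hpb.flip hpb₂
    rw [← hcomp]
    exact hE.deflation_comp (deflation_of_iso hE _) hg₂def
  obtain ⟨K₁, k₁, hconf₁⟩ := hwdef
  have hconfφ : E.IsConflation φ w := by
    refine conflation_of_kernel hE hconf₁ hφw' ?_ ?_
    · intro T τ hτ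
      have h1 : (τ ≫ v) ≫ q = 0 := by
        rw [Category.assoc, hpb.w, ← Category.assoc, hτ, Limits.zero_comp]
      obtain ⟨σ, hσ⟩ := conf_lift hE h (τ ≫ v) h1
      refine ⟨σ, hpb.hom_ext ?_ ?_⟩
      · rw [Category.assoc, hφv, hσ]
      · rw [Category.assoc, hφw', Limits.comp_zero, hτ]
    · intro T a b hab
      rw [← cancel_mono k, ← hφv]
      simp only [← Category.assoc, hab]
  exact ⟨P, v, w, φ, ψ, hconfφ, hconfψ⟩

/-- Pushout of a conflation along an arbitrary morphism out of the kernel. -/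
lemma pushout_conf (hE : E.IsExactCategory) {K Y₁ Z₁ K' : A} {k : K ⟶ Y₁} {q : Y₁ ⟶ Z₁}
    (h : E.IsConflation k q) (t : K ⟶ K') :
    ∃ (P : A) (k' : K' ⟶ P) (w : Y₁ ⟶ P) (q' : P ⟶ Z₁),
      E.IsConflation k' q' ∧ IsPushout k t w k' ∧ w ≫ q' = q := by
  obtain ⟨P, k', w, hinf, hpo⟩ := hE.inflation_pushout t ⟨Z₁, q, h⟩
  have hkq : k ≫ q = t ≫ (0 : K' ⟶ Z₁) := by simp [hE.comp_zero h]
  set q' := hpo.desc q 0 hkq with hq'def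
  have hwq : w ≫ q' = q := hpo.inl_desc _ _ _
  have hkq' : k' ≫ q' = 0 := hpo.inr_desc _ _ _
  obtain ⟨Z₀, c₀, hconf₀⟩ := hinf
  refine ⟨P, k', w, q', ?_, hpo, hwq⟩
  refine conflation_of_cokernel hE hconf₀ hkq' ?_ ?_
  · intro T τ hτ
    have h1 : k ≫ w ≫ τ = 0 := by
      rw [← Category.assoc, hpo.w, Category.assoc, hτ, Limits.comp_zero]
    obtain ⟨σ, hσ⟩ := conf_desc hE h (w ≫ τ) h1
    refine ⟨σ, hpo.hom_ext ?_ ?_⟩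
    · rw [← Category.assoc, hwq, hσ]
    · rw [← Category.assoc, hkq', Limits.zero_comp, hτ]
  · intro T a b hab
    have hq : Epi q := conf_epi hE h
    rw [← cancel_epi q, ← hwq]
    simp only [Category.assoc, hab]

end AuxProof2
section AuxProof3

variable {A : Type u} [Category.{v} A] [Preadditive A] {E : ExactStruct A}

/-- `Ext¹(−, Y₀)` vanishing is closed under extensions. -/
lemma ext1Zero_of_conflation (hE : E.IsExactCategory) {A₁ B₁ C₁ Y₀ : A} {f : A₁ ⟶ B₁}
    {g : B₁ ⟶ C₁} (hconf : E.IsConflation f g)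
    (hA : E.Ext1Zero A₁ Y₀) (hC : E.Ext1Zero C₁ Y₀) : E.Ext1Zero B₁ Y₀ := by
  intro Eo u p hup
  obtain ⟨P, u', p', v, hP, hpb, huv⟩ := pullback_conf hE hup f
  obtain ⟨σ, hσ⟩ := hA hP
  obtain ⟨ρ, hρ⟩ := retraction_of_section hE hP σ hσ
  have hve : E.IsConflation v (p ≫ g) := conf_pullback_comp hE hup hconf hpb
  obtain ⟨Q, f'', w, g'', hQ, hpo, hwg⟩ := pushout_conf hE hve ρ
  obtain ⟨τ, hτ⟩ := hC hQ
  obtain ⟨ρ', hρ'⟩ := retraction_of_section hE hQ τ hτ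
  have hr : u ≫ w ≫ ρ' = 𝟙 Y₀ := by
    rw [← huv, Category.assoc, ← Category.assoc v w ρ', hpo.w]
    rw [Category.assoc, hρ', Category.comp_id, hρ]
  exact section_of_retraction hE hup _ hr

/-- `Ext¹(−, Y₀)` vanishing is invariant under isomorphism. -/
lemma ext1Zero_iso (hE : E.IsExactCategory) {M M' Y₀ : A} (e : M' ≅ M)
    (h : E.Ext1Zero M Y₀) : E.Ext1Zero M' Y₀ := by
  intro Eo u p hup
  have h2 : E.IsConflation u (p ≫ e.hom) := conflation_iso_target hE hup e
  obtain ⟨s, hs⟩ := h h2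
  refine ⟨e.hom ≫ s, ?_⟩
  rw [← cancel_mono e.hom]
  simp only [Category.assoc, hs]
  simp

section CP

variable {X : Set A}

lemma mem_X_iff (hcomp : E.IsCompleteCP X (E.rightPerp X)) {M : A} :
    M ∈ X ↔ ∀ Y' ∈ E.rightPerp X, E.Ext1Zero M Y' := by
  have h := hcomp.1.2
  constructor
  · intro hM Y' hY'
    exact hY' M hM
  · intro hM
    rw [← h]
    exact hM

lemma ext1_of_memX (hcomp : E.IsCompleteCP X (E.rightPerp X)) {M Y' : A}
    (hM : M ∈ X) (hY' : Y' ∈ E.rightPerp X) : E.Ext1Zero M Y' := hY' M hM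

/-- `X` is closed under isomorphisms. -/
lemma memX_iso (hE : E.IsExactCategory) (hcomp : E.IsCompleteCP X (E.rightPerp X))
    {M M' : A} (e : M' ≅ M) (hM : M ∈ X) : M' ∈ X := by
  rw [mem_X_iff hcomp]
  intro Y' hY'
  exact ext1Zero_iso hE e (ext1_of_memX hcomp hM hY')

/-- `X` is closed under extensions. -/
lemma memX_ext (hE : E.IsExactCategory) (hcomp : E.IsCompleteCP X (E.rightPerp X))
    {A₁ B₁ C₁ : A} {f : A₁ ⟶ B₁} {g : B₁ ⟶ C₁} (hconf : E.IsConflation f g)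
    (hA : A₁ ∈ X) (hC : C₁ ∈ X) : B₁ ∈ X := by
  rw [mem_X_iff hcomp]
  intro Y' hY'
  exact ext1Zero_of_conflation hE hconf (ext1_of_memX hcomp hA hY')
    (ext1_of_memX hcomp hC hY')

/-- The kernel of the identity conflation belongs to `X`. -/
lemma memX_of_conf_id (hE : E.IsExactCategory) (hcomp : E.IsCompleteCP X (E.rightPerp X))
    {K M : A} {k : K ⟶ M} (h : E.IsConflation k (𝟙 M)) : K ∈ X := by
  have hk0 : k = 0 := by simpa using hE.comp_zero h
  have hm : Mono k := conf_mono hE h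
  have hid : 𝟙 K = 0 := by
    rw [← cancel_mono k, hk0]; simp
  rw [mem_X_iff hcomp]
  intro Y' _
  intro Eo u p hup
  exact ⟨0, by rw [Limits.zero_comp, hid]⟩

/-- The inductive "dimension at most `n`" predicate. -/
def Ddim (E : ExactStruct A) (X : Set A) : ℕ → A → Prop
  | 0, M => M ∈ X
  | (n+1), M => ∃ (K X₀ : A) (f : K ⟶ X₀) (g : X₀ ⟶ M),
      X₀ ∈ X ∧ E.IsConflation f g ∧ Ddim E X n K

lemma ddim_iso (hE : E.IsExactCategory) (hcomp : E.IsCompleteCP X (E.rightPerp X))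
    {n : ℕ} {M M' : A} (e : M ≅ M') (h : Ddim E X n M) : Ddim E X n M' := by
  cases n with
  | zero => exact memX_iso hE hcomp e.symm h
  | succ n =>
    obtain ⟨K, X₀, f, g, hX₀, hconf, hK⟩ := h
    exact ⟨K, X₀, f, g ≫ e.hom, hX₀, conflation_iso_target hE hconf e, hK⟩

lemma pdLE_iff_ddim (hE : E.IsExactCategory) (hcomp : E.IsCompleteCP X (E.rightPerp X))
    {n : ℕ} {M : A} : E.pdLE X n M ↔ Ddim E X n M := by
  induction n generalizing M with
  | zero =>
    constructor
    · rintro ⟨K, hK, ⟨e⟩⟩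
      exact memX_iso hE hcomp e.symm hK
    · intro hM
      exact ⟨M, hM, ⟨Iso.refl M⟩⟩
  | succ n ih =>
    constructor
    · rintro ⟨K, hK, K', X₀, f, g, hX₀, hconf, hsyz⟩
      exact ⟨K', X₀, f, g, hX₀, hconf, ih.mp ⟨K, hK, hsyz⟩⟩
    · rintro ⟨K', X₀, f, g, hX₀, hconf, hK'⟩
      obtain ⟨K, hK, hsyz⟩ := ih.mpr hK'
      exact ⟨K, hK, K', X₀, f, g, hX₀, hconf, hsyz⟩

lemma ddim_succ (hE : E.IsExactCategory) (hcomp : E.IsCompleteCP X (E.rightPerp X))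
    {n : ℕ} {M : A} (h : Ddim E X n M) : Ddim E X (n + 1) M := by
  induction n generalizing M with
  | zero =>
    obtain ⟨K, k, hk⟩ := hE.id_deflation M
    exact ⟨K, M, k, 𝟙 M, h, hk, memX_of_conf_id hE hcomp hk⟩
  | succ n ih =>
    obtain ⟨K, X₀, f, g, hX₀, hconf, hK⟩ := h
    exact ⟨K, X₀, f, g, hX₀, hconf, ih hK⟩

lemma ddim_mono (hE : E.IsExactCategory) (hcomp : E.IsCompleteCP X (E.rightPerp X))
    {m n : ℕ} (hmn : m ≤ n) {M : A} (h : Ddim E X m M) : Ddim E X n M := by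
  induction hmn with
  | refl => exact h
  | step _ ih => exact ddim_succ hE hcomp ih

end CP

end AuxProof3
section AuxProof4

variable {A : Type u} [Category.{v} A] [Preadditive A] {E : ExactStruct A} {X : Set A}

/-- Key lemma: in a conflation with quotient in `X`, the kernel and middle term
have the same dimension. -/
lemma ddim_iff_of_conf (hE : E.IsExactCategory) (hcomp : E.IsCompleteCP X (E.rightPerp X))
    (hher : E.HereditaryClasses X (E.rightPerp X)) :
    ∀ n : ℕ, ∀ {U D X₀ : A} {f : U ⟶ D} {g : D ⟶ X₀},
      X₀ ∈ X → E.IsConflation f g → (Ddim E X n U ↔ Ddim E X n D) := by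
  intro n
  induction n with
  | zero =>
    intro U D X₀ f g hX₀ hconf
    exact ⟨fun hU => memX_ext hE hcomp hconf hU hX₀,
      fun hD => hher.1 hconf hD hX₀⟩
  | succ n ih =>
    -- first, a transfer lemma at level n+1 to special syzygies, using `ih`
    have SP : ∀ {M K X₁ : A} {k : K ⟶ X₁} {q : X₁ ⟶ M}, X₁ ∈ X →
        E.IsConflation k q → Ddim E X (n+1) M → Ddim E X n K := by
      intro M K X₁ k q hX₁ hkq hM
      obtain ⟨K₀, X₂, k₀, q₀, hX₂, hc₀, hd₀⟩ := hM
      obtain ⟨P, v, w, φ, ψ, hφ, hψ⟩ := pullback_two_conf hE hc₀ hkq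
      -- hφ : IsConflation φ w  (φ : K₀ ⟶ P, w : P ⟶ X₁)
      -- hψ : IsConflation ψ v  (ψ : K ⟶ P, v : P ⟶ X₂)
      have hP : Ddim E X n P := (ih hX₁ hφ).mp hd₀
      exact (ih hX₂ hψ).mpr hP
    intro U D X₀ f g hX₀ hconf
    -- special precover of D
    obtain ⟨Y_D, X_D, a, b, hY_D, hX_D, hab⟩ := hcomp.2.1 D
    -- pull it back along f
    obtain ⟨P, a', p', v, hP, hpb, hav⟩ := pullback_conf hE hab f
    -- P sits in a conflation P ↣ X_D ↠ X₀
    have hPconf : E.IsConflation v (b ≫ g) := conf_pullback_comp hE hab hconf hpb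
    have hPX : P ∈ X := hher.1 hPconf hX_D hX₀
    constructor
    · intro hU
      have hYD : Ddim E X n Y_D := SP hPX hP hU
      exact ⟨Y_D, X_D, a, b, hX_D, hab, hYD⟩
    · intro hD
      have hYD : Ddim E X n Y_D := SP hX_D hab hD
      exact ⟨Y_D, P, a', p', hPX, hP, hYD⟩

/-- Transfer to an arbitrary one-step syzygy. -/
lemma ddim_step (hE : E.IsExactCategory) (hcomp : E.IsCompleteCP X (E.rightPerp X))
    (hher : E.HereditaryClasses X (E.rightPerp X)) {n : ℕ} {M K X₁ : A} {k : K ⟶ X₁}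
    {q : X₁ ⟶ M} (hX₁ : X₁ ∈ X) (hkq : E.IsConflation k q)
    (hM : Ddim E X (n+1) M) : Ddim E X n K := by
  obtain ⟨K₀, X₂, k₀, q₀, hX₂, hc₀, hd₀⟩ := hM
  obtain ⟨P, v, w, φ, ψ, hφ, hψ⟩ := pullback_two_conf hE hc₀ hkq
  have hP : Ddim E X n P := (ddim_iff_of_conf hE hcomp hher n hX₁ hφ).mp hd₀
  exact (ddim_iff_of_conf hE hcomp hher n hX₂ hψ).mpr hP

/-- Inequality (2): `Ddim` is closed under extensions (level by level). -/
lemma ddim_ext (hE : E.IsExactCategory) (hcomp : E.IsCompleteCP X (E.rightPerp X))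
    (hher : E.HereditaryClasses X (E.rightPerp X)) :
    ∀ n : ℕ, ∀ {A₁ B₁ C₁ : A} {f : A₁ ⟶ B₁} {g : B₁ ⟶ C₁},
      E.IsConflation f g → Ddim E X n A₁ → Ddim E X n C₁ → Ddim E X n B₁ := by
  intro n
  induction n with
  | zero =>
    intro A₁ B₁ C₁ f g hconf hA hC
    exact memX_ext hE hcomp hconf hA hC
  | succ n ih =>
    -- inequality (1) at level n, from `ih`
    have I1 : ∀ {A₁ B₁ C₁ : A} {f : A₁ ⟶ B₁} {g : B₁ ⟶ C₁},
        E.IsConflation f g → Ddim E X n B₁ → Ddim E X (n+1) C₁ → Ddim E X n A₁ := by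
      intro A₁ B₁ C₁ f g hconf hB hC
      obtain ⟨Y', X', a, b, hY', hX', hab⟩ := hcomp.2.1 C₁
      have hY'd : Ddim E X n Y' := ddim_step hE hcomp hher hX' hab hC
      obtain ⟨P, v, w, φ, ψ, hφ, hψ⟩ := pullback_two_conf hE hconf hab
      -- hφ : IsConflation φ w (φ : A₁ ⟶ P, w : P ⟶ X'), hψ : (ψ : Y' ⟶ P, v : P ⟶ B₁)
      have hP : Ddim E X n P := ih hψ hY'd hB
      exact (ddim_iff_of_conf hE hcomp hher n hX' hφ).mpr hP
    -- inequality (3) at level n+1, from I1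
    have I3 : ∀ {K P₁ B₁ : A} {k : K ⟶ P₁} {v : P₁ ⟶ B₁},
        E.IsConflation k v → Ddim E X n K → Ddim E X (n+1) P₁ → Ddim E X (n+1) B₁ := by
      intro K P₁ B₁ k v hconf hK hP₁
      obtain ⟨Y_B, X_B, a, b, hY_B, hX_B, hab⟩ := hcomp.2.1 B₁
      obtain ⟨P₃, v₃, w₃, φ₃, ψ₃, hφ₃, hψ₃⟩ := pullback_two_conf hE hconf hab
      -- φ₃ : K ⟶ P₃, w₃ : P₃ ⟶ X_B ; ψ₃ : Y_B ⟶ P₃, v₃ : P₃ ⟶ P₁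
      have hP₃ : Ddim E X n P₃ := (ddim_iff_of_conf hE hcomp hher n hX_B hφ₃).mp hK
      have hYB : Ddim E X n Y_B := I1 hψ₃ hP₃ hP₁
      exact ⟨Y_B, X_B, a, b, hX_B, hab, hYB⟩
    intro A₁ B₁ C₁ f g hconf hA hC
    obtain ⟨Y_C, X_C, a, b, hY_C, hX_C, hab⟩ := hcomp.2.1 C₁
    have hYC : Ddim E X n Y_C := ddim_step hE hcomp hher hX_C hab hC
    obtain ⟨P, v, w, φ, ψ, hφ, hψ⟩ := pullback_two_conf hE hconf hab
    -- φ : A₁ ⟶ P, w : P ⟶ X_C ; ψ : Y_C ⟶ P, v : P ⟶ B₁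
    have hP : Ddim E X (n+1) P := (ddim_iff_of_conf hE hcomp hher (n+1) hX_C hφ).mp hA
    exact I3 hψ hYC hP

/-- Inequality (1). -/
lemma ddim_ker (hE : E.IsExactCategory) (hcomp : E.IsCompleteCP X (E.rightPerp X))
    (hher : E.HereditaryClasses X (E.rightPerp X)) {n : ℕ} {A₁ B₁ C₁ : A} {f : A₁ ⟶ B₁}
    {g : B₁ ⟶ C₁} (hconf : E.IsConflation f g) (hB : Ddim E X n B₁)
    (hC : Ddim E X (n+1) C₁) : Ddim E X n A₁ := by
  obtain ⟨Y', X', a, b, hY', hX', hab⟩ := hcomp.2.1 C₁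
  have hY'd : Ddim E X n Y' := ddim_step hE hcomp hher hX' hab hC
  obtain ⟨P, v, w, φ, ψ, hφ, hψ⟩ := pullback_two_conf hE hconf hab
  have hP : Ddim E X n P := ddim_ext hE hcomp hher n hψ hY'd hB
  exact (ddim_iff_of_conf hE hcomp hher n hX' hφ).mpr hP

/-- Inequality (3). -/
lemma ddim_coker (hE : E.IsExactCategory) (hcomp : E.IsCompleteCP X (E.rightPerp X))
    (hher : E.HereditaryClasses X (E.rightPerp X)) {n : ℕ} {A₁ B₁ C₁ : A} {f : A₁ ⟶ B₁}
    {g : B₁ ⟶ C₁} (hconf : E.IsConflation f g) (hA : Ddim E X n A₁)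
    (hB : Ddim E X (n+1) B₁) : Ddim E X (n+1) C₁ := by
  obtain ⟨Y_C, X_C, a, b, hY_C, hX_C, hab⟩ := hcomp.2.1 C₁
  obtain ⟨P₃, v₃, w₃, φ₃, ψ₃, hφ₃, hψ₃⟩ := pullback_two_conf hE hconf hab
  have hP₃ : Ddim E X n P₃ := (ddim_iff_of_conf hE hcomp hher n hX_C hφ₃).mp hA
  have hYC : Ddim E X n Y_C := ddim_ker hE hcomp hher hψ₃ hP₃ hB
  exact ⟨Y_C, X_C, a, b, hX_C, hab, hYC⟩

end AuxProof4
section AuxProof5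

variable {A : Type u} [Category.{v} A] [Preadditive A] {E : ExactStruct A} {X : Set A}

lemma pdim_le_coe_iff (hE : E.IsExactCategory) (hcomp : E.IsCompleteCP X (E.rightPerp X))
    {n : ℕ} {M : A} : E.pdim X M ≤ (n : ℕ∞) ↔ Ddim E X n M := by
  constructor
  · intro h
    by_contra hc
    have h1 : (n : ℕ∞) + 1 ≤ E.pdim X M := by
      apply le_sInf
      rintro x ⟨m, hm, rfl⟩
      have hd : Ddim E X m M := (pdLE_iff_ddim hE hcomp).mp hm
      have hnm : n + 1 ≤ m := by
        by_contra hle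
        push_neg at hle
        exact hc (ddim_mono hE hcomp (Nat.lt_succ_iff.mp hle) hd)
      show (n : ℕ∞) + 1 ≤ (m : ℕ∞)
      exact_mod_cast hnm
    have h2 : (n : ℕ∞) < (n : ℕ∞) + 1 := by
      exact_mod_cast Nat.lt_succ_self n
    exact absurd h (not_le.mpr (lt_of_lt_of_le h2 h1))
  · intro hd
    exact sInf_le ⟨n, (pdLE_iff_ddim hE hcomp).mpr hd, rfl⟩

lemma enat_arith (a b c : ℕ∞) (H1 : a ≤ max b (c - 1)) (H2 : b ≤ max a c)
    (H3 : c ≤ max b (a + 1)) :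
    (b ≠ c → a = max b (c - 1)) ∧ (c ≠ a + 1 → b = max a c) ∧
      (b ≠ a → c = max b (a + 1)) := by
  induction a using ENat.recTopCoe with
  | top =>
    induction b using ENat.recTopCoe with
    | top => simp
    | coe b =>
      induction c using ENat.recTopCoe with
      | top => simp
      | coe c =>
        exfalso
        rw [top_le_iff, max_eq_top] at H1
        rcases H1 with h | h
        · exact (ENat.coe_ne_top b) h
        · rw [show ((c:ℕ∞) - 1) = ((c - 1 : ℕ) : ℕ∞) by exact_mod_cast rfl] at h
          exact (ENat.coe_ne_top _) h
  | coe a =>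
    induction b using ENat.recTopCoe with
    | top =>
      induction c using ENat.recTopCoe with
      | top => simp
      | coe c =>
        exfalso
        rw [top_le_iff, max_eq_top] at H2
        rcases H2 with h | h
        · exact (ENat.coe_ne_top a) h
        · exact (ENat.coe_ne_top c) h
    | coe b =>
      induction c using ENat.recTopCoe with
      | top =>
        exfalso
        rw [top_le_iff, max_eq_top] at H3
        rcases H3 with h | h
        · exact (ENat.coe_ne_top b) h
        · rw [show ((a:ℕ∞) + 1) = ((a + 1 : ℕ) : ℕ∞) by exact_mod_cast rfl] at h
          exact (ENat.coe_ne_top _) h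
      | coe c =>
        rw [show ((c:ℕ∞) - 1) = ((c - 1 : ℕ) : ℕ∞) by exact_mod_cast rfl] at H1 ⊢
        rw [show ((a:ℕ∞) + 1) = ((a + 1 : ℕ) : ℕ∞) by exact_mod_cast rfl] at H3 ⊢
        rw [show (max (b:ℕ∞) ((c - 1 : ℕ) : ℕ∞)) = ((max b (c-1) : ℕ) : ℕ∞) by
          exact_mod_cast rfl] at H1 ⊢
        rw [show (max (a:ℕ∞) (c:ℕ∞)) = ((max a c : ℕ) : ℕ∞) by exact_mod_cast rfl] at H2 ⊢
        rw [show (max (b:ℕ∞) ((a + 1 : ℕ) : ℕ∞)) = ((max b (a+1) : ℕ) : ℕ∞) by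
          exact_mod_cast rfl] at H3 ⊢
        have H1' : a ≤ max b (c - 1) := by exact_mod_cast H1
        have H2' : b ≤ max a c := by exact_mod_cast H2
        have H3' : c ≤ max b (a + 1) := by exact_mod_cast H3
        refine ⟨fun hbc => ?_, fun hca => ?_, fun hba => ?_⟩
        · have hbc' : b ≠ c := fun h => hbc (by exact_mod_cast h)
          have : a = max b (c - 1) := by omega
          exact_mod_cast this
        · have hca' : c ≠ a + 1 := fun h => hca (by exact_mod_cast h)
          have : b = max a c := by omega
          exact_mod_cast this
        · have hba' : b ≠ a := fun h => hba (by exact_mod_cast h)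
          have : c = max b (a + 1) := by omega
          exact_mod_cast this

end AuxProof5
/-- Behaviour of the `X`-projective dimension on conflations,
for a complete hereditary cotorsion pair `(X, X^⊥)` in a WIC exact category with
enough projectives and injectives.  (Subtraction and addition are taken in `ℕ∞`;
truncated subtraction realizes the convention that `X-pd(C) - 1` is `0` when
`X-pd(C) = 0`.) -/
theorem statement1 {A : Type u} [Category.{v} A] [Preadditive A]
    (E : ExactStruct A) (hE : E.IsExactCategory) (hwic : WIC A)
    (hproj : E.EnoughProjectives) (hinj : E.EnoughInjectives)
    (X : Set A)
    (hcomp : E.IsCompleteCP X (E.rightPerp X))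
    (hher : E.HereditaryClasses X (E.rightPerp X))
    {A₀ B₀ C₀ : A} (f : A₀ ⟶ B₀) (g : B₀ ⟶ C₀) (hconf : E.IsConflation f g) :
    (E.pdim X A₀ ≤ max (E.pdim X B₀) (E.pdim X C₀ - 1) ∧
      (E.pdim X B₀ ≠ E.pdim X C₀ →
        E.pdim X A₀ = max (E.pdim X B₀) (E.pdim X C₀ - 1))) ∧
    (E.pdim X B₀ ≤ max (E.pdim X A₀) (E.pdim X C₀) ∧
      (E.pdim X C₀ ≠ E.pdim X A₀ + 1 →
        E.pdim X B₀ = max (E.pdim X A₀) (E.pdim X C₀))) ∧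
    (E.pdim X C₀ ≤ max (E.pdim X B₀) (E.pdim X A₀ + 1) ∧
      (E.pdim X B₀ ≠ E.pdim X A₀ →
        E.pdim X C₀ = max (E.pdim X B₀) (E.pdim X A₀ + 1))) := by


  have bridge : ∀ {n : ℕ} {M : A}, E.pdim X M ≤ (n : ℕ∞) ↔ Ddim E X n M :=
    fun {n M} => pdim_le_coe_iff hE hcomp
  have J1 : E.pdim X A₀ ≤ max (E.pdim X B₀) (E.pdim X C₀ - 1) := by
    by_cases htop : max (E.pdim X B₀) (E.pdim X C₀ - 1) = ⊤
    · rw [htop]; exact le_top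
    · obtain ⟨k, hk⟩ : ∃ k : ℕ, (k : ℕ∞) = _ := ⟨ENat.toNat _, ENat.coe_toNat htop⟩
      have hB : E.pdim X B₀ ≤ (k : ℕ∞) := by rw [hk]; exact le_max_left _ _
      have hC1 : E.pdim X C₀ - 1 ≤ (k : ℕ∞) := by rw [hk]; exact le_max_right _ _
      have hC : E.pdim X C₀ ≤ ((k + 1 : ℕ) : ℕ∞) := by
        have h2 := tsub_le_iff_right.mp hC1
        calc E.pdim X C₀ ≤ (k : ℕ∞) + 1 := h2
          _ = ((k + 1 : ℕ) : ℕ∞) := by exact_mod_cast rfl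
      have hdd := ddim_ker hE hcomp hher hconf (bridge.mp hB) (bridge.mp hC)
      rw [← hk]
      exact bridge.mpr hdd
  have J2 : E.pdim X B₀ ≤ max (E.pdim X A₀) (E.pdim X C₀) := by
    by_cases htop : max (E.pdim X A₀) (E.pdim X C₀) = ⊤
    · rw [htop]; exact le_top
    · obtain ⟨k, hk⟩ : ∃ k : ℕ, (k : ℕ∞) = _ := ⟨ENat.toNat _, ENat.coe_toNat htop⟩
      have hA : E.pdim X A₀ ≤ (k : ℕ∞) := by rw [hk]; exact le_max_left _ _
      have hC : E.pdim X C₀ ≤ (k : ℕ∞) := by rw [hk]; exact le_max_right _ _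
      have hdd := ddim_ext hE hcomp hher k hconf (bridge.mp hA) (bridge.mp hC)
      rw [← hk]
      exact bridge.mpr hdd
  have J3 : E.pdim X C₀ ≤ max (E.pdim X B₀) (E.pdim X A₀ + 1) := by
    by_cases htop : max (E.pdim X B₀) (E.pdim X A₀ + 1) = ⊤
    · rw [htop]; exact le_top
    · obtain ⟨k, hk⟩ : ∃ k : ℕ, (k : ℕ∞) = _ := ⟨ENat.toNat _, ENat.coe_toNat htop⟩
      have hB : E.pdim X B₀ ≤ (k : ℕ∞) := by rw [hk]; exact le_max_left _ _
      have hA1 : E.pdim X A₀ + 1 ≤ (k : ℕ∞) := by rw [hk]; exact le_max_right _ _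
      have hk1 : 1 ≤ k := by
        have h1 : (1 : ℕ∞) ≤ (k : ℕ∞) := le_trans le_add_self hA1
        exact_mod_cast h1
      obtain ⟨j, rfl⟩ : ∃ j, k = j + 1 := ⟨k - 1, by omega⟩
      have hAne : E.pdim X A₀ ≠ ⊤ := by
        intro h
        rw [h, (by simp : (⊤ : ℕ∞) + 1 = ⊤), top_le_iff] at hA1
        exact ENat.coe_ne_top _ hA1
      obtain ⟨α, hα⟩ : ∃ α : ℕ, (α : ℕ∞) = E.pdim X A₀ := ⟨ENat.toNat _, ENat.coe_toNat hAne⟩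
      have hαj : α ≤ j := by
        have h3 : ((α + 1 : ℕ) : ℕ∞) ≤ ((j + 1 : ℕ) : ℕ∞) := by
          calc ((α + 1 : ℕ) : ℕ∞) = (α : ℕ∞) + 1 := by exact_mod_cast rfl
            _ = E.pdim X A₀ + 1 := by rw [hα]
            _ ≤ ((j + 1 : ℕ) : ℕ∞) := hA1
        have h4 : α + 1 ≤ j + 1 := by exact_mod_cast h3
        omega
      have hAdd : Ddim E X j A₀ := by
        apply bridge.mp
        rw [← hα]
        exact_mod_cast hαj
      have hBdd : Ddim E X (j + 1) B₀ := bridge.mp hB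
      have hdd := ddim_coker hE hcomp hher hconf hAdd hBdd
      rw [← hk]
      exact bridge.mpr hdd
  obtain ⟨E1, E2, E3⟩ := enat_arith _ _ _ J1 J2 J3
  exact ⟨⟨J1, E1⟩, ⟨J2, E2⟩, ⟨J3, E3⟩⟩

end CotorsionPaper
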